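/- Let p be an odd prime and let g₅ mean g_p(x) = θ^{p-1}(x) for the hyperelliptic derivation on y² = g(x) with deg g = 5. Then deg g_p < 2p, and the only possibly nonzero coefficients of g_p modulo p are in degrees 0, 1, p, and p+1. -/

import Mathlib

open Polynomial

/-- The polynomials `g_k` for odd `k = 2m+1`: `g₁ = x` and
`g_k = g''_{k-2}·g + (1/2)·g'_{k-2}·g'`.  Here `hyperGk g m` is `g_{2m+1}`;
in particular `g_p = hyperGk g ((p-1)/2)`. -/
noncomputable def hyperGk {K : Type*} [Field K] (g : K[X]) : ℕ → K[X]
  | 0 => X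
  | m + 1 =>
      derivative (derivative (hyperGk g m)) * g
        + Polynomial.C (2⁻¹ : K) * derivative (hyperGk g m) * derivative g

namespace HyperAux
open Finset

variable {K : Type*} [Field K]

/-- multiplication on pairs representing `a + b·y` in `K[x,y]/(y² - g)` -/
noncomputable def hmul (g : K[X]) (u v : K[X] × K[X]) : K[X] × K[X] :=
  (u.1 * v.1 + u.2 * v.2 * g, u.1 * v.2 + u.2 * v.1)

/-- the derivation `θ` with `θ x = y`, `θ y = g'/2`, on pairs. -/
noncomputable def hT (g : K[X]) : (K[X] × K[X]) →ₗ[K] (K[X] × K[X]) where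
  toFun u := (derivative u.2 * g + C (2⁻¹ : K) * u.2 * derivative g, derivative u.1)
  map_add' u v := by
    simp only [Prod.fst_add, Prod.snd_add, derivative_add, Prod.mk_add_mk, Prod.mk.injEq]
    exact ⟨by ring, trivial⟩
  map_smul' c u := by
    simp only [RingHom.id_apply, Prod.smul_fst, Prod.smul_snd, Prod.smul_mk,
      Polynomial.smul_eq_C_mul, derivative_mul, derivative_C, Prod.mk.injEq]
    constructor <;> ring

lemma hT_apply (g : K[X]) (u : K[X] × K[X]) :
    hT g u = (derivative u.2 * g + C (2⁻¹ : K) * u.2 * derivative g, derivative u.1) := rfl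

lemma hC_half (h2 : (2 : K) ≠ 0) : (C (2⁻¹ : K) * 2 : K[X]) = 1 := by
  rw [show ((2 : K[X]) = C (2 : K)) from (map_ofNat C 2).symm, ← C_mul,
    inv_mul_cancel₀ h2, C_1]

lemma hT_leibniz (g : K[X]) (h2 : (2 : K) ≠ 0) (u v : K[X] × K[X]) :
    hT g (hmul g u v) = hmul g (hT g u) v + hmul g u (hT g v) := by
  have hC := hC_half h2
  obtain ⟨a, b⟩ := u; obtain ⟨c, d⟩ := v
  simp only [hT_apply, hmul, derivative_add, derivative_mul, Prod.mk_add_mk, Prod.mk.injEq]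
  constructor
  · ring
  · linear_combination (-(d * b * derivative g)) * hC

lemma iterate_hT_leibniz (g : K[X]) (h2 : (2 : K) ≠ 0) (n : ℕ) (u v : K[X] × K[X]) :
    (hT g)^[n] (hmul g u v) =
      ∑ k ∈ range n.succ, n.choose k • hmul g ((hT g)^[n - k] u) ((hT g)^[k] v) := by
  induction n with
  | zero => simp [Finset.range]
  | succ n IH =>
    calc
      (hT g)^[n + 1] (hmul g u v) =
          hT g (∑ k ∈ range n.succ,
              n.choose k • hmul g ((hT g)^[n - k] u) ((hT g)^[k] v)) := by
        rw [Function.iterate_succ_apply', IH]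
      _ = (∑ k ∈ range n.succ,
            n.choose k • hmul g ((hT g)^[n - k + 1] u) ((hT g)^[k] v)) +
          ∑ k ∈ range n.succ,
            n.choose k • hmul g ((hT g)^[n - k] u) ((hT g)^[k + 1] v) := by
        simp_rw [map_sum, map_nsmul, hT_leibniz g h2, Function.iterate_succ_apply',
          smul_add, sum_add_distrib]
      _ = (∑ k ∈ range n.succ,
                n.choose k.succ • hmul g ((hT g)^[n - k] u) ((hT g)^[k + 1] v)) +
              1 • hmul g ((hT g)^[n + 1] u) ((hT g)^[0] v) +
            ∑ k ∈ range n.succ, n.choose k • hmul g ((hT g)^[n - k] u) ((hT g)^[k + 1] v) :=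
        ?_
      _ = ((∑ k ∈ range n.succ, n.choose k • hmul g ((hT g)^[n - k] u) ((hT g)^[k + 1] v)) +
              ∑ k ∈ range n.succ,
                n.choose k.succ • hmul g ((hT g)^[n - k] u) ((hT g)^[k + 1] v)) +
            1 • hmul g ((hT g)^[n + 1] u) ((hT g)^[0] v) := by
        rw [add_comm, add_assoc]
      _ = (∑ i ∈ range n.succ,
              (n + 1).choose (i + 1) • hmul g ((hT g)^[n + 1 - (i + 1)] u) ((hT g)^[i + 1] v)) +
            1 • hmul g ((hT g)^[n + 1] u) ((hT g)^[0] v) := by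
        simp_rw [Nat.choose_succ_succ, Nat.succ_sub_succ, add_smul, sum_add_distrib]
      _ = ∑ k ∈ range n.succ.succ,
            n.succ.choose k • hmul g ((hT g)^[n.succ - k] u) ((hT g)^[k] v) := by
        rw [sum_range_succ' _ n.succ, Nat.choose_zero_right, tsub_zero]
    congr
    refine (sum_range_succ' _ _).trans (congr_arg₂ (· + ·) ?_ ?_)
    · rw [sum_range_succ, Nat.choose_succ_self, zero_smul, add_zero]
      refine sum_congr rfl fun k hk => ?_
      rw [mem_range] at hk
      congr
      omega
    · rw [Nat.choose_zero_right, tsub_zero]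

lemma hTp_leibniz (g : K[X]) {p : ℕ} (hp : p.Prime) [CharP K p] (h2 : (2 : K) ≠ 0)
    (u v : K[X] × K[X]) :
    (hT g)^[p] (hmul g u v)
      = hmul g ((hT g)^[p] u) v + hmul g u ((hT g)^[p] v) := by
  rw [iterate_hT_leibniz g h2 p u v]
  have hz : ∀ k ∈ range p.succ, k ≠ 0 → k ≠ p →
      p.choose k • hmul g ((hT g)^[p - k] u) ((hT g)^[k] v) = 0 := by
    intro k hk h0 hkp
    rw [mem_range] at hk
    obtain ⟨c, hc⟩ := hp.dvd_choose_self h0 (by omega)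
    rw [hc, mul_smul]
    have hpz : ∀ w : K[X] × K[X], p • w = 0 := by
      intro w
      rw [← Nat.cast_smul_eq_nsmul K p w, CharP.cast_eq_zero K p, zero_smul]
    rw [hpz]
  rw [← Finset.sum_subset (s₁ := ({0, p} : Finset ℕ))
      (by intro k hk; simp at hk; rw [mem_range]; omega)
      (fun k hk hk' => hz k hk (by simp at hk'; omega) (by simp at hk'; omega))]
  rw [Finset.sum_pair (Ne.symm hp.ne_zero)]
  simp [Nat.choose_zero_right, Nat.choose_self, Nat.sub_self]

lemma hT_pure (g f : K[X]) : hT g (f, 0) = (0, derivative f) := by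
  simp [hT_apply]

lemma hT_y (g f : K[X]) :
    hT g (0, f) = (derivative f * g + C (2⁻¹ : K) * f * derivative g, 0) := by
  simp [hT_apply]

lemma iterate_two_x (g : K[X]) (m : ℕ) :
    (hT g)^[2 * m] ((X : K[X]), 0) = (hyperGk g m, 0) := by
  induction m with
  | zero => simp [hyperGk]
  | succ m IH =>
    rw [show 2 * (m + 1) = (2 * m) + 1 + 1 by ring, Function.iterate_succ_apply',
      Function.iterate_succ_apply', IH, hT_pure, hT_y]
    rw [show hyperGk g (m + 1) = derivative (derivative (hyperGk g m)) * g
        + Polynomial.C (2⁻¹ : K) * derivative (hyperGk g m) * derivative g from rfl]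

lemma iterate_p_x (g : K[X]) {p m : ℕ} (hpm : p = 2 * m + 1) :
    (hT g)^[p] ((X : K[X]), 0) = (0, derivative (hyperGk g m)) := by
  rw [hpm, Function.iterate_succ_apply', iterate_two_x, hT_pure]

lemma iterate_p_pure (g : K[X]) {p m : ℕ} (hp : p.Prime) [CharP K p] (h2 : (2 : K) ≠ 0)
    (hpm : p = 2 * m + 1) (f : K[X]) :
    (hT g)^[p] (f, 0) = (0, derivative f * derivative (hyperGk g m)) := by
  induction f using Polynomial.induction_on with
  | C a =>
      rw [hpm, Function.iterate_succ_apply, hT_pure, derivative_C,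
        show ((0 : K[X]), (0 : K[X])) = (0 : K[X] × K[X]) from rfl,
        iterate_map_zero]
      simp
      rfl
  | add f1 f2 ih1 ih2 =>
      rw [show ((f1 + f2 : K[X]), (0 : K[X])) = ((f1, 0) : K[X] × K[X]) + (f2, 0) by
          simp, iterate_map_add, ih1, ih2, derivative_add]
      simp [add_mul]
  | monomial n a ih =>
      have hx : ((C a * X ^ (n + 1) : K[X]), (0 : K[X]))
          = hmul g (C a * X ^ n, 0) ((X : K[X]), 0) := by
        simp only [hmul, mul_zero, zero_mul, add_zero, zero_add, mul_one]
        rw [Prod.mk.injEq]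
        constructor
        · ring
        · ring
      rw [hx, hTp_leibniz g hp h2, ih, iterate_p_x g hpm]
      simp only [hmul, mul_zero, zero_mul, add_zero, zero_add, mul_one, one_mul,
        Prod.mk_add_mk, Prod.mk.injEq]
      have hder : derivative (C a * X ^ (n + 1) : K[X])
          = derivative (C a * X ^ n) * X + C a * X ^ n := by
        rw [pow_succ, ← mul_assoc, derivative_mul, derivative_X, mul_one]
      constructor
      · simp
      · rw [hder]
        ring

lemma second_derivative_zero (g : K[X]) (hgm : g.Monic) {p m : ℕ} (hp : p.Prime)
    [CharP K p] (h2 : (2 : K) ≠ 0) (hpm : p = 2 * m + 1) :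
    derivative (derivative (hyperGk g m)) = 0 := by
  set G := hyperGk g m with hG
  set q := derivative (derivative G) * g + C (2⁻¹ : K) * derivative G * derivative g with hq
  have hy : (hT g)^[p] ((0 : K[X]), (1 : K[X])) = (q, 0) := by
    have h1 : ((0 : K[X]), (1 : K[X])) = hT g ((X : K[X]), 0) := by
      rw [hT_pure, derivative_X]
    rw [h1, ← Function.iterate_succ_apply, Function.iterate_succ_apply',
      iterate_p_x g hpm, hT_y]
  have hsq : hmul g ((0 : K[X]), (1 : K[X])) (0, 1) = (g, 0) := by
    simp [hmul]
  have key := hTp_leibniz g hp h2 ((0 : K[X]), (1 : K[X])) ((0 : K[X]), (1 : K[X]))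
  rw [hsq, iterate_p_pure g hp h2 hpm, hy] at key
  simp only [hmul, mul_zero, zero_mul, add_zero, zero_add, mul_one, one_mul,
    Prod.mk_add_mk] at key
  have h2nd : derivative g * derivative G = q + q := congrArg Prod.snd key
  have hkey : (2 : K[X]) * (derivative (derivative G) * g) = 0 := by
    rw [hq] at h2nd
    linear_combination (-1 : K[X]) * h2nd + (-(derivative G * derivative g)) * hC_half h2
  have h2X : (2 : K[X]) ≠ 0 := by
    rw [show ((2 : K[X]) = C (2 : K)) from (map_ofNat C 2).symm]
    exact fun h => h2 (by simpa using congrArg (fun t => t.coeff 0) h)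
  rcases mul_eq_zero.mp hkey with h | h
  · exact absurd h h2X
  · rcases mul_eq_zero.mp h with h' | h'
    · exact h'
    · exact absurd h' hgm.ne_zero


lemma natDegree_hyperGk_le (g : K[X]) (hdeg : g.natDegree ≤ 5) (m : ℕ) :
    (hyperGk g m).natDegree ≤ 3 * m + 1 := by
  induction m with
  | zero => simpa [hyperGk] using natDegree_X_le
  | succ m IH =>
    have hd1 : (derivative (hyperGk g m)).natDegree ≤ 3 * m :=
      le_trans (natDegree_derivative_le _) (by omega)
    have hd2 : (derivative (derivative (hyperGk g m))).natDegree ≤ 3 * m - 1 :=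
      le_trans (natDegree_derivative_le _) (by omega)
    have hg' : (derivative g).natDegree ≤ 4 :=
      le_trans (natDegree_derivative_le g) (by omega)
    have t1 : (derivative (derivative (hyperGk g m)) * g).natDegree ≤ 3 * m + 4 := by
      by_cases hz : (derivative (hyperGk g m)).natDegree = 0
      · obtain ⟨a, ha⟩ := natDegree_eq_zero.mp hz
        rw [← ha, derivative_C, zero_mul, natDegree_zero]
        exact Nat.zero_le _
      · have hm1 : 1 ≤ 3 * m := by omega
        exact le_trans (natDegree_mul_le) (by omega)
    have hCd : ((C (2⁻¹ : K)) * derivative (hyperGk g m)).natDegree ≤ 3 * m :=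
      le_trans (natDegree_mul_le) (by simp only [natDegree_C]; omega)
    have t2 : ((C (2⁻¹ : K)) * derivative (hyperGk g m) * derivative g).natDegree
        ≤ 3 * m + 4 :=
      le_trans (natDegree_mul_le) (by omega)
    rw [show hyperGk g (m + 1) = derivative (derivative (hyperGk g m)) * g
        + Polynomial.C (2⁻¹ : K) * derivative (hyperGk g m) * derivative g from rfl]
    refine le_trans (natDegree_add_le _ _) ?_
    rw [show 3 * (m + 1) + 1 = 3 * m + 4 by ring]
    exact max_le t1 t2

end HyperAux

/-- For `p` an odd prime and `g` a (monic) quintic over a field of characteristic `p`,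
the polynomial `g_p = θ^{p-1}(x)` has degree `< 2p`, and its only possibly nonzero
coefficients are in degrees `0`, `1`, `p`, and `p+1`. -/
theorem gp_degree_and_coeffs {K : Type*} [Field K] {p : ℕ} (hp : p.Prime) (hodd : Odd p)
    [CharP K p] (g : K[X]) (hg : g.Monic) (hdeg : g.natDegree = 5) :
    (hyperGk g ((p - 1) / 2)).natDegree < 2 * p ∧
    ∀ d : ℕ, d ≠ 0 → d ≠ 1 → d ≠ p → d ≠ p + 1 →
      (hyperGk g ((p - 1) / 2)).coeff d = 0 := by
  obtain ⟨m, hm⟩ := hodd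
  have hm2 : (p - 1) / 2 = m := by omega
  have hpne2 : p ≠ 2 := by omega
  have h2 : (2 : K) ≠ 0 := by
    intro h
    have h2' : ((2 : ℕ) : K) = 0 := by exact_mod_cast h
    have := (CharP.cast_eq_zero_iff K p 2).mp h2'
    rcases (Nat.dvd_prime Nat.prime_two).mp this with h | h
    · exact hp.one_lt.ne' h
    · exact hpne2 h
  rw [hm2]
  have hdegle : (hyperGk g m).natDegree ≤ 3 * m + 1 :=
    HyperAux.natDegree_hyperGk_le g (le_of_eq hdeg) m
  have hdd : derivative (derivative (hyperGk g m)) = 0 :=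
    HyperAux.second_derivative_zero g hg hp h2 hm
  constructor
  · omega
  · intro d h0 h1 hdp hdp1
    by_cases hbig : (hyperGk g m).natDegree < d
    · exact coeff_eq_zero_of_natDegree_lt hbig
    · have hd2p : d < 2 * p := by omega
      obtain ⟨e, rfl⟩ : ∃ e, d = e + 2 := ⟨d - 2, by omega⟩
      have hndvd : ∀ k : ℕ, k ≠ 0 → k ≠ p → k < 2 * p → ¬ (p ∣ k) := by
        intro k hk0 hkp hk2p hdvd
        obtain ⟨c, rfl⟩ := hdvd
        have hclt : c < 2 := by
          by_contra hcge
          push_neg at hcge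
          have : p * 2 ≤ p * c := Nat.mul_le_mul_left p hcge
          omega
        interval_cases c <;> omega
      have hne2 : ((e + 2 : ℕ) : K) ≠ 0 := by
        rw [Ne, CharP.cast_eq_zero_iff K p]
        exact hndvd (e + 2) (by omega) (by omega) (by omega)
      have hne1 : ((e + 1 : ℕ) : K) ≠ 0 := by
        rw [Ne, CharP.cast_eq_zero_iff K p]
        exact hndvd (e + 1) (by omega) (by omega) (by omega)
      have hc : (derivative (derivative (hyperGk g m))).coeff e = 0 := by
        rw [hdd, coeff_zero]
      rw [coeff_derivative, coeff_derivative] at hc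
      push_cast at hc hne1 hne2
      have h11 : e + 1 + 1 = e + 2 := by omega
      rw [h11] at hc
      rw [show ((e : K) + 1 + 1) = (e : K) + 2 by ring] at hc
      rcases mul_eq_zero.mp hc with h | h
      · rcases mul_eq_zero.mp h with h' | h'
        · exact h'
        · exact absurd h' hne2
      · exact absurd h hne1
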